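/- Assume d_w(v) > 0 for every v in C0 (no restriction on net sizes). Then there exists a proper subset C of C0 with u in C and cut(C)/d_w(C) < cut(C0)/d_w(C0) if and only if there exists an s-t cut of the Lawler-expansion flow graph whose weight is strictly less than cut(C0)·d_w(C0). -/

import Mathlib

open scoped ENNReal

namespace Stmt2

/-- Nodes of the Lawler-expansion flow graph: the elements of `C0` (via `base`),
two auxiliary nodes `eminus i`, `eplus i` for each net `i`, a source `s`
(with which the contracted node `r` is identified) and a sink `t`. -/
inductive LNode (α ι : Type*) where
  | base : α → LNode α ι
  | eminus : ι → LNode α ι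
  | eplus : ι → LNode α ι
  | s : LNode α ι
  | t : LNode α ι
  deriving DecidableEq

variable {α ι : Type*} [DecidableEq α] [DecidableEq ι]

/-- `cut C` : total weight of the nets containing an element of `C` and an
element of `(C0 ∪ {r}) \ C`. -/
def cut (C0 : Finset α) (r : α) (Nets : Finset ι) (net : ι → Finset α) (w : ι → ℝ)
    (C : Finset α) : ℝ :=
  ∑ i ∈ Nets.filter
      (fun i => (net i ∩ C).Nonempty ∧ (net i ∩ (insert r C0 \ C)).Nonempty), w i

/-- weighted degree `d_w(v)` : total weight of the nets containing `v`. -/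
def dw (Nets : Finset ι) (net : ι → Finset α) (w : ι → ℝ) (v : α) : ℝ :=
  ∑ i ∈ Nets.filter (fun i => v ∈ net i), w i

/-- weighted volume `d_w(C)`. -/
def dwS (Nets : Finset ι) (net : ι → Finset α) (w : ι → ℝ) (C : Finset α) : ℝ :=
  ∑ v ∈ C, dw Nets net w v

/-- Capacities of the Lawler-expansion flow graph. -/
noncomputable def lawlerCap (C0 : Finset α) (r u : α) (Nets : Finset ι)
    (net : ι → Finset α) (w : ι → ℝ) : LNode α ι → LNode α ι → ℝ≥0∞
  | LNode.eminus i, LNode.eplus j =>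
      if i = j ∧ i ∈ Nets then ENNReal.ofReal (dwS Nets net w C0 * w i) else 0
  | LNode.base x, LNode.eminus i =>
      if i ∈ Nets ∧ x ∈ net i ∧ x ∈ C0 then ⊤ else 0
  | LNode.s, LNode.eminus i =>
      if i ∈ Nets ∧ r ∈ net i then ⊤ else 0
  | LNode.eplus i, LNode.base x =>
      if i ∈ Nets ∧ x ∈ net i ∧ x ∈ C0 then ⊤ else 0
  | LNode.base v, LNode.t =>
      if v ∈ C0 then
        (if v = u then ⊤
         else ENNReal.ofReal (cut C0 r Nets net w C0 * dw Nets net w v))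
      else 0
  | _, _ => 0

/-- The node set of the Lawler-expansion flow graph:
`C0 ∪ {s, t} ∪ {e⁻, e⁺ : e ∈ 𝓔}`. -/
def nodeSet (C0 : Finset α) (Nets : Finset ι) : Finset (LNode α ι) :=
  C0.image LNode.base ∪ Nets.image LNode.eminus ∪ Nets.image LNode.eplus ∪
    {LNode.s, LNode.t}


lemma cut_nonneg (C0 : Finset α) (r : α) (Nets : Finset ι) (net : ι → Finset α)
    (w : ι → ℝ) (hw : ∀ i ∈ Nets, 0 ≤ w i) (C : Finset α) :
    0 ≤ cut C0 r Nets net w C :=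
  Finset.sum_nonneg fun i hi => hw i (Finset.mem_filter.1 hi).1

lemma dw_nonneg (Nets : Finset ι) (net : ι → Finset α) (w : ι → ℝ)
    (hw : ∀ i ∈ Nets, 0 ≤ w i) (v : α) : 0 ≤ dw Nets net w v :=
  Finset.sum_nonneg fun i hi => hw i (Finset.mem_filter.1 hi).1

lemma dwS_nonneg (Nets : Finset ι) (net : ι → Finset α) (w : ι → ℝ)
    (hw : ∀ i ∈ Nets, 0 ≤ w i) (C : Finset α) : 0 ≤ dwS Nets net w C :=
  Finset.sum_nonneg fun v _ => dw_nonneg Nets net w hw v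

lemma dwS_mono (Nets : Finset ι) (net : ι → Finset α) (w : ι → ℝ)
    (hw : ∀ i ∈ Nets, 0 ≤ w i) {C C' : Finset α} (h : C ⊆ C') :
    dwS Nets net w C ≤ dwS Nets net w C' :=
  Finset.sum_le_sum_of_subset_of_nonneg h fun v _ _ => dw_nonneg Nets net w hw v

lemma sum_pairs (C0 : Finset α) (r u : α) (Nets : Finset ι)
    (net : ι → Finset α) (w : ι → ℝ) (hw : ∀ i ∈ Nets, 0 ≤ w i)
    (C : Finset α) (hC : C ⊆ C0) (huC : u ∈ C) :
    ∑ p ∈ ((Nets.filter (fun i => (net i ∩ C).Nonempty ∧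
          (net i ∩ (insert r C0 \ C)).Nonempty)).image
          (fun i => ((LNode.eminus i : LNode α ι), (LNode.eplus i : LNode α ι))) ∪
        (C0 \ C).image (fun v => ((LNode.base v : LNode α ι), (LNode.t : LNode α ι)))),
      lawlerCap C0 r u Nets net w p.1 p.2 =
    ENNReal.ofReal (dwS Nets net w C0 * cut C0 r Nets net w C +
      cut C0 r Nets net w C0 * (dwS Nets net w C0 - dwS Nets net w C)) := by
  rw [Finset.sum_union (by
    rw [Finset.disjoint_left]
    rintro ⟨a, b⟩ h1 h2
    simp only [Finset.mem_image] at h1 h2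
    obtain ⟨i, -, hi⟩ := h1
    obtain ⟨v, -, hv⟩ := h2
    rw [← hv] at hi
    simp [Prod.ext_iff] at hi)]
  rw [Finset.sum_image (by intro a _ b _ h; simpa using h),
      Finset.sum_image (by intro a _ b _ h; simpa using h)]
  have h1 : ∀ i ∈ Nets.filter (fun i => (net i ∩ C).Nonempty ∧
      (net i ∩ (insert r C0 \ C)).Nonempty),
      lawlerCap C0 r u Nets net w (LNode.eminus i) (LNode.eplus i)
        = ENNReal.ofReal (dwS Nets net w C0 * w i) := by
    intro i hi
    rw [Finset.mem_filter] at hi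
    simp [lawlerCap, hi.1]
  have h2 : ∀ v ∈ C0 \ C,
      lawlerCap C0 r u Nets net w (LNode.base v) LNode.t
        = ENNReal.ofReal (cut C0 r Nets net w C0 * dw Nets net w v) := by
    intro v hv
    rw [Finset.mem_sdiff] at hv
    have hvu : v ≠ u := fun h => hv.2 (h ▸ huC)
    simp [lawlerCap, hv.1, hvu]
  rw [Finset.sum_congr rfl h1, Finset.sum_congr rfl h2,
    ← ENNReal.ofReal_sum_of_nonneg (fun i hi =>
        mul_nonneg (dwS_nonneg _ _ _ hw _) (hw i (Finset.mem_filter.1 hi).1)),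
    ← ENNReal.ofReal_sum_of_nonneg (fun v _ =>
        mul_nonneg (cut_nonneg _ _ _ _ _ hw _) (dw_nonneg _ _ _ hw _)),
    ← Finset.mul_sum, ← Finset.mul_sum]
  have e1 : (∑ i ∈ Nets.filter (fun i => (net i ∩ C).Nonempty ∧
      (net i ∩ (insert r C0 \ C)).Nonempty), w i) = cut C0 r Nets net w C := rfl
  have e2 : (∑ i ∈ C0 \ C, dw Nets net w i)
      = dwS Nets net w C0 - dwS Nets net w C := Finset.sum_sdiff_eq_sub hC
  rw [e1, e2, ← ENNReal.ofReal_add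
      (mul_nonneg (dwS_nonneg _ _ _ hw _) (cut_nonneg _ _ _ _ _ hw _))
      (mul_nonneg (cut_nonneg _ _ _ _ _ hw _)
        (sub_nonneg.2 (dwS_mono Nets net w hw hC)))]


@[simp] lemma mem_nodeSet_base {C0 : Finset α} {Nets : Finset ι} {x : α} :
    (LNode.base x : LNode α ι) ∈ nodeSet C0 Nets ↔ x ∈ C0 := by simp [nodeSet]

@[simp] lemma mem_nodeSet_eminus {C0 : Finset α} {Nets : Finset ι} {i : ι} :
    (LNode.eminus i : LNode α ι) ∈ nodeSet C0 Nets ↔ i ∈ Nets := by simp [nodeSet]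

@[simp] lemma mem_nodeSet_eplus {C0 : Finset α} {Nets : Finset ι} {i : ι} :
    (LNode.eplus i : LNode α ι) ∈ nodeSet C0 Nets ↔ i ∈ Nets := by simp [nodeSet]

@[simp] lemma mem_nodeSet_s {C0 : Finset α} {Nets : Finset ι} :
    (LNode.s : LNode α ι) ∈ nodeSet C0 Nets := by simp [nodeSet]

@[simp] lemma mem_nodeSet_t {C0 : Finset α} {Nets : Finset ι} :
    (LNode.t : LNode α ι) ∈ nodeSet C0 Nets := by simp [nodeSet]

/-- There is a proper subset `C ⊂ C0` containing the seed node `u` with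
`cut(C)/d_w(C) < cut(C0)/d_w(C0)` iff there is an s-t cut of the
Lawler-expansion flow graph of weight strictly less than `cut(C0)·d_w(C0)`. -/
theorem lawler_expansion_maxflow_iff
    (C0 : Finset α) (u r : α) (hu : u ∈ C0) (hr : r ∉ C0)
    (Nets : Finset ι) (net : ι → Finset α) (w : ι → ℝ)
    (hsub : ∀ i ∈ Nets, net i ⊆ insert r C0)
    (hcard : ∀ i ∈ Nets, 2 ≤ (net i).card)
    (hw : ∀ i ∈ Nets, 0 < w i)
    (hdw : ∀ v ∈ C0, 0 < dw Nets net w v) :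
    (∃ C : Finset α, C ⊂ C0 ∧ u ∈ C ∧
        cut C0 r Nets net w C / dwS Nets net w C <
          cut C0 r Nets net w C0 / dwS Nets net w C0) ↔
    (∃ B1 B2 : Finset (LNode α ι),
        B1 ∪ B2 = nodeSet C0 Nets ∧ Disjoint B1 B2 ∧
        LNode.s ∈ B1 ∧ LNode.t ∈ B2 ∧
        (∑ x ∈ B1, ∑ y ∈ B2, lawlerCap C0 r u Nets net w x y) <
          ENNReal.ofReal (cut C0 r Nets net w C0 * dwS Nets net w C0)) := by
  have hw' : ∀ i ∈ Nets, 0 ≤ w i := fun i hi => (hw i hi).le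
  have hDpos : 0 < dwS Nets net w C0 := by
    have h1 : dw Nets net w u ≤ dwS Nets net w C0 :=
      Finset.single_le_sum (fun v _ => dw_nonneg _ _ _ hw' v) hu
    linarith [hdw u hu]
  constructor
  · rintro ⟨C, hCss, huC, hrat⟩
    have hC : C ⊆ C0 := hCss.subset
    have hdCpos : 0 < dwS Nets net w C := by
      have h1 : dw Nets net w u ≤ dwS Nets net w C :=
        Finset.single_le_sum (fun v _ => dw_nonneg _ _ _ hw' v) huC
      linarith [hdw u hu]
    set B2 : Finset (LNode α ι) :=
      C.image LNode.base ∪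
      (Nets.filter (fun i => (net i ∩ C).Nonempty)).image LNode.eplus ∪
      (Nets.filter (fun i => ¬ (net i ∩ (insert r C0 \ C)).Nonempty)).image LNode.eminus ∪
      {LNode.t} with hB2
    have memB2_base : ∀ x : α, (LNode.base x : LNode α ι) ∈ B2 ↔ x ∈ C := by
      intro x; simp [hB2]
    have memB2_eplus : ∀ i, (LNode.eplus i : LNode α ι) ∈ B2 ↔
        i ∈ Nets ∧ (net i ∩ C).Nonempty := by
      intro i; simp [hB2]
    have memB2_eminus : ∀ i, (LNode.eminus i : LNode α ι) ∈ B2 ↔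
        i ∈ Nets ∧ ¬ (net i ∩ (insert r C0 \ C)).Nonempty := by
      intro i; simp [hB2]
    have memB2_t : (LNode.t : LNode α ι) ∈ B2 := by simp [hB2]
    have memB2_s : (LNode.s : LNode α ι) ∉ B2 := by simp [hB2]
    have hB2sub : B2 ⊆ nodeSet C0 Nets := by
      intro x hx
      rw [hB2] at hx
      simp only [Finset.mem_union, Finset.mem_image, Finset.mem_filter,
        Finset.mem_singleton] at hx
      rcases hx with ((⟨v, hv, rfl⟩ | ⟨i, hi, rfl⟩) | ⟨i, hi, rfl⟩) | rfl
      · simp [hC hv]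
      · simp [hi.1]
      · simp [hi.1]
      · simp
    refine ⟨nodeSet C0 Nets \ B2, B2, Finset.sdiff_union_of_subset hB2sub,
      Finset.sdiff_disjoint, Finset.mem_sdiff.2 ⟨by simp, memB2_s⟩, memB2_t, ?_⟩
    set P : Finset (LNode α ι × LNode α ι) :=
      ((Nets.filter (fun i => (net i ∩ C).Nonempty ∧
          (net i ∩ (insert r C0 \ C)).Nonempty)).image
          (fun i => ((LNode.eminus i : LNode α ι), (LNode.eplus i : LNode α ι))) ∪
        (C0 \ C).image (fun v => ((LNode.base v : LNode α ι), (LNode.t : LNode α ι))))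
      with hP
    have hPsub : P ⊆ (nodeSet C0 Nets \ B2) ×ˢ B2 := by
      intro p hp
      rw [hP, Finset.mem_union] at hp
      rcases hp with hp | hp <;>
        simp only [Finset.mem_image, Finset.mem_filter] at hp
      · obtain ⟨i, ⟨hiN, h1, h2⟩, rfl⟩ := hp
        rw [Finset.mem_product]
        refine ⟨Finset.mem_sdiff.2 ⟨by simp [hiN], ?_⟩, (memB2_eplus i).2 ⟨hiN, h1⟩⟩
        rw [memB2_eminus]; exact fun h => h.2 h2
      · obtain ⟨v, hv, rfl⟩ := hp
        rw [Finset.mem_sdiff] at hv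
        rw [Finset.mem_product]
        refine ⟨Finset.mem_sdiff.2 ⟨by simp [hv.1], ?_⟩, memB2_t⟩
        rw [memB2_base]; exact hv.2
    have hzero : ∀ p ∈ (nodeSet C0 Nets \ B2) ×ˢ B2, p ∉ P →
        lawlerCap C0 r u Nets net w p.1 p.2 = 0 := by
      rintro ⟨x, y⟩ hp hnp
      rw [Finset.mem_product, Finset.mem_sdiff] at hp
      obtain ⟨⟨hx1, hx2⟩, hy⟩ := hp
      cases x <;> cases y <;> simp only [lawlerCap, ite_eq_right_iff, and_imp]
      case base.eminus a i =>
        intro hiN hai haC0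
        have haC : a ∉ C := fun h => hx2 ((memB2_base a).2 h)
        have hne : (net i ∩ (insert r C0 \ C)).Nonempty :=
          ⟨a, Finset.mem_inter.2 ⟨hai,
            Finset.mem_sdiff.2 ⟨Finset.mem_insert_of_mem haC0, haC⟩⟩⟩
        exact absurd hne ((memB2_eminus i).1 hy).2
      case base.t a =>
        intro haC0
        have haC : a ∉ C := fun h => hx2 ((memB2_base a).2 h)
        exact absurd (by
          rw [hP, Finset.mem_union]
          exact Or.inr (Finset.mem_image.2 ⟨a, Finset.mem_sdiff.2 ⟨haC0, haC⟩, rfl⟩)) hnp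
      case eminus.eplus i j =>
        intro heq hiN
        subst heq
        have h2 : (net i ∩ (insert r C0 \ C)).Nonempty := by
          by_contra h
          exact hx2 ((memB2_eminus i).2 ⟨hiN, h⟩)
        have h1 : (net i ∩ C).Nonempty := ((memB2_eplus i).1 hy).2
        exact absurd (by
          rw [hP, Finset.mem_union]
          exact Or.inl (Finset.mem_image.2 ⟨i, Finset.mem_filter.2 ⟨hiN, h1, h2⟩, rfl⟩)) hnp
      case eplus.base i a =>
        intro hiN hai haC0
        have haC : a ∈ C := (memB2_base a).1 hy
        exact absurd ((memB2_eplus i).2 ⟨hiN, ⟨a, Finset.mem_inter.2 ⟨hai, haC⟩⟩⟩) hx2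
      case s.eminus i =>
        intro hiN hri
        have hrC : r ∉ C := fun h => hr (hC h)
        have hne : (net i ∩ (insert r C0 \ C)).Nonempty :=
          ⟨r, Finset.mem_inter.2 ⟨hri,
            Finset.mem_sdiff.2 ⟨Finset.mem_insert_self r C0, hrC⟩⟩⟩
        exact absurd hne ((memB2_eminus i).1 hy).2
    rw [← Finset.sum_product', ← Finset.sum_subset hPsub hzero, hP,
      sum_pairs C0 r u Nets net w hw' C hC huC]
    have hc : cut C0 r Nets net w C * dwS Nets net w C0 <
        cut C0 r Nets net w C0 * dwS Nets net w C :=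
      (div_lt_div_iff₀ hdCpos hDpos).1 hrat
    have hcC : 0 ≤ cut C0 r Nets net w C := cut_nonneg _ _ _ _ _ hw' _
    have hK0 : 0 ≤ cut C0 r Nets net w C0 := cut_nonneg _ _ _ _ _ hw' _
    have hKpos : 0 < cut C0 r Nets net w C0 := by
      nlinarith [mul_nonneg hcC hDpos.le]
    rw [ENNReal.ofReal_lt_ofReal_iff (mul_pos hKpos hDpos)]
    nlinarith
  · rintro ⟨B1, B2, hun, hdis, hs, ht, hlt⟩
    set C := C0.filter (fun x => (LNode.base x : LNode α ι) ∈ B2) with hCdef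
    have hC : C ⊆ C0 := Finset.filter_subset _ _
    have hfin : (∑ x ∈ B1, ∑ y ∈ B2, lawlerCap C0 r u Nets net w x y) ≠ ⊤ :=
      (hlt.trans_le le_top).ne
    have htop : ∀ x ∈ B1, ∀ y ∈ B2, lawlerCap C0 r u Nets net w x y ≠ ⊤ := by
      intro x hx y hy hcap
      apply hfin
      rw [eq_top_iff]
      calc (⊤ : ℝ≥0∞) = lawlerCap C0 r u Nets net w x y := hcap.symm
        _ ≤ ∑ y ∈ B2, lawlerCap C0 r u Nets net w x y :=
            Finset.single_le_sum (fun _ _ => zero_le) hy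
        _ ≤ ∑ x ∈ B1, ∑ y ∈ B2, lawlerCap C0 r u Nets net w x y :=
            Finset.single_le_sum
              (f := fun x => ∑ y ∈ B2, lawlerCap C0 r u Nets net w x y)
              (fun _ _ => zero_le) hx
    have hmem1 : ∀ z : LNode α ι, z ∈ nodeSet C0 Nets → z ∉ B2 → z ∈ B1 := by
      intro z hz h2
      rw [← hun] at hz
      exact (Finset.mem_union.1 hz).resolve_right h2
    have huC : u ∈ C := by
      rw [hCdef, Finset.mem_filter]
      refine ⟨hu, ?_⟩
      by_contra h
      have h1 : (LNode.base u : LNode α ι) ∈ B1 := hmem1 _ (by simp [hu]) h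
      exact htop _ h1 _ ht (by simp [lawlerCap, hu])
    have hbv : ∀ v ∈ C0 \ C, (LNode.base v : LNode α ι) ∈ B1 := by
      intro v hv
      rw [Finset.mem_sdiff] at hv
      refine hmem1 _ (by simp [hv.1]) ?_
      intro h
      exact hv.2 (by rw [hCdef, Finset.mem_filter]; exact ⟨hv.1, h⟩)
    have hepl : ∀ i ∈ Nets, (net i ∩ C).Nonempty →
        (LNode.eplus i : LNode α ι) ∈ B2 := by
      intro i hiN hne
      obtain ⟨x, hx⟩ := hne
      rw [Finset.mem_inter] at hx
      have hxC0 : x ∈ C0 := hC hx.2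
      have hxB2 : (LNode.base x : LNode α ι) ∈ B2 := by
        have h := hx.2
        rw [hCdef, Finset.mem_filter] at h
        exact h.2
      by_contra h
      have h1 : (LNode.eplus i : LNode α ι) ∈ B1 := hmem1 _ (by simp [hiN]) h
      exact htop _ h1 _ hxB2 (by simp [lawlerCap, hiN, hx.1, hxC0])
    have hem : ∀ i ∈ Nets, (net i ∩ (insert r C0 \ C)).Nonempty →
        (LNode.eminus i : LNode α ι) ∈ B1 := by
      intro i hiN hne
      obtain ⟨y, hy⟩ := hne
      rw [Finset.mem_inter, Finset.mem_sdiff] at hy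
      obtain ⟨hyi, hy1, hyC⟩ := hy
      refine hmem1 _ (by simp [hiN]) ?_
      intro hB2m
      rcases Finset.mem_insert.1 hy1 with rfl | hyC0
      · exact htop _ hs _ hB2m (by simp [lawlerCap, hiN, hyi])
      · have hyB1 : (LNode.base y : LNode α ι) ∈ B1 := by
          refine hmem1 _ (by simp [hyC0]) ?_
          intro h
          exact hyC (by rw [hCdef, Finset.mem_filter]; exact ⟨hyC0, h⟩)
        exact htop _ hyB1 _ hB2m (by simp [lawlerCap, hiN, hyi, hyC0])
    have hPsub : ((Nets.filter (fun i => (net i ∩ C).Nonempty ∧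
          (net i ∩ (insert r C0 \ C)).Nonempty)).image
          (fun i => ((LNode.eminus i : LNode α ι), (LNode.eplus i : LNode α ι))) ∪
        (C0 \ C).image (fun v => ((LNode.base v : LNode α ι), (LNode.t : LNode α ι))))
        ⊆ B1 ×ˢ B2 := by
      intro p hp
      rw [Finset.mem_union] at hp
      rcases hp with hp | hp <;>
        simp only [Finset.mem_image, Finset.mem_filter] at hp
      · obtain ⟨i, ⟨hiN, h1, h2⟩, rfl⟩ := hp
        exact Finset.mem_product.2 ⟨hem i hiN h2, hepl i hiN h1⟩
      · obtain ⟨v, hv, rfl⟩ := hp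
        exact Finset.mem_product.2 ⟨hbv v hv, ht⟩
    have hge : ENNReal.ofReal (dwS Nets net w C0 * cut C0 r Nets net w C +
        cut C0 r Nets net w C0 * (dwS Nets net w C0 - dwS Nets net w C)) ≤
        ∑ x ∈ B1, ∑ y ∈ B2, lawlerCap C0 r u Nets net w x y := by
      rw [← sum_pairs C0 r u Nets net w hw' C hC huC, ← Finset.sum_product']
      exact Finset.sum_le_sum_of_subset hPsub
    have hlt2 := lt_of_le_of_lt hge hlt
    rw [ENNReal.ofReal_lt_ofReal_iff_of_nonneg (by
      have h0 := dwS_mono Nets net w hw' hC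
      have h1 := cut_nonneg C0 r Nets net w hw' C
      have h2 := cut_nonneg C0 r Nets net w hw' C0
      have h3 := dwS_nonneg Nets net w hw' C0
      nlinarith)] at hlt2
    have hdCpos : 0 < dwS Nets net w C := by
      have h1 : dw Nets net w u ≤ dwS Nets net w C :=
        Finset.single_le_sum (fun v _ => dw_nonneg _ _ _ hw' v) huC
      linarith [hdw u hu]
    have hkey : dwS Nets net w C0 * cut C0 r Nets net w C <
        cut C0 r Nets net w C0 * dwS Nets net w C := by nlinarith
    have hne : C ≠ C0 := by
      intro h
      rw [h] at hkey
      nlinarith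
    refine ⟨C, lt_of_le_of_ne hC hne, huC, ?_⟩
    rw [div_lt_div_iff₀ hdCpos hDpos]
    nlinarith

end Stmt2
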